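/- Let c, d, k be positive integers with c ≥ 2, and let n = cd + c − 1. Suppose D is a subset of [n] of cardinality d + k that is not contained in any interval [A, f_c(A)] with A a d-subset of [n]. Then no superset of D is contained in any interval [A, f_c(A)] with A a d-subset of [n]. -/

import Mathlib

open Fin.NatCast
open Fin.CommRing
/-- The clockwise arc of `l` consecutive points on the circular representation of `[n]`
(modelled as `Fin n`), starting at `s`. -/
def cArc (n : ℕ) [NeZero n] (s : Fin n) (l : ℕ) : Finset (Fin n) :=
  (Finset.range l).image (fun t : ℕ => s + (t : Fin n))

/-- The interval `[A,B] = {C : A ⊆ C ⊆ B}` in the Boolean lattice of subsets of `[n]`. -/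
def fInterval {n : ℕ} (A B : Finset (Fin n)) : Finset (Finset (Fin n)) :=
  B.powerset.filter (fun C => A ⊆ C)

/-- A block structure of `A ⊆ [n]` with respect to the density `δ`: a partition of the
circular representation of `[n]` into clockwise-consecutive blocks
`B₁, G₁, B₂, G₂, …, B_k, G_k` satisfying conditions (i)-(iv). Block `Bᵢ` is the arc of
length `blen i` starting at `bstart i`, and the gap `Gᵢ` is the arc of length `glen i`
immediately following `Bᵢ`. -/
structure BlockStructure (n : ℕ) [NeZero n] (δ : ℝ) (A : Finset (Fin n)) where
  k : ℕ
  kpos : 0 < k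
  bstart : Fin k → Fin n
  blen : Fin k → ℕ
  glen : Fin k → ℕ
  blen_pos : ∀ i, 0 < blen i
  /-- the blocks and gaps are clockwise-consecutive: `B_{i+1}` starts right after `Gᵢ` -/
  consec : ∀ i : Fin k,
    bstart ⟨(i.val + 1) % k, Nat.mod_lt _ kpos⟩ = bstart i + ((blen i + glen i : ℕ) : Fin n)
  /-- (i) the first element of each block lies in `A` -/
  start_mem : ∀ i, bstart i ∈ A
  /-- (ii) the gaps contain no element of `A` -/
  gap_inter : ∀ i, Disjoint (cArc n (bstart i + (blen i : Fin n)) (glen i)) A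
  /-- the blocks and gaps cover `[n]` -/
  cover : ∀ x : Fin n,
    (∃ i, x ∈ cArc n (bstart i) (blen i)) ∨
      (∃ i, x ∈ cArc n (bstart i + (blen i : Fin n)) (glen i))
  /-- distinct blocks are disjoint -/
  block_disj : ∀ i j, i ≠ j →
    Disjoint (cArc n (bstart i) (blen i)) (cArc n (bstart j) (blen j))
  /-- distinct gaps are disjoint -/
  gap_disj : ∀ i j, i ≠ j →
    Disjoint (cArc n (bstart i + (blen i : Fin n)) (glen i))
      (cArc n (bstart j + (blen j : Fin n)) (glen j))
  /-- blocks are disjoint from gaps -/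
  block_gap_disj : ∀ i j,
    Disjoint (cArc n (bstart i) (blen i)) (cArc n (bstart j + (blen j : Fin n)) (glen j))
  /-- (iii) lower density bound: `δ·|A ∩ Bᵢ| − 1 < |Bᵢ|` -/
  density_lb : ∀ i,
    δ * ((A ∩ cArc n (bstart i) (blen i)).card : ℝ) - 1 < ((cArc n (bstart i) (blen i)).card : ℝ)
  /-- (iii) upper density bound: `|Bᵢ| ≤ δ·|A ∩ Bᵢ|` -/
  density_ub : ∀ i,
    ((cArc n (bstart i) (blen i)).card : ℝ) ≤ δ * ((A ∩ cArc n (bstart i) (blen i)).card : ℝ)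
  /-- (iv) every proper initial segment `[bᵢ,y] ⊊ Bᵢ` satisfies `|[bᵢ,y]| + 1 ≤ δ·|[bᵢ,y] ∩ A|` -/
  initial_seg : ∀ i, ∀ t : ℕ, t + 1 < blen i →
    ((cArc n (bstart i) (t + 1)).card : ℝ) + 1 ≤ δ * (((cArc n (bstart i) (t + 1)) ∩ A).card : ℝ)

namespace BlockStructure

variable {n : ℕ} [NeZero n] {δ : ℝ} {A : Finset (Fin n)}

/-- The block `Bᵢ`. -/
def block (P : BlockStructure n δ A) (i : Fin P.k) : Finset (Fin n) :=
  cArc n (P.bstart i) (P.blen i)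

/-- The gap `Gᵢ`. -/
def gap (P : BlockStructure n δ A) (i : Fin P.k) : Finset (Fin n) :=
  cArc n (P.bstart i + (P.blen i : Fin n)) (P.glen i)

/-- `𝒢_δ(A) = G₁ ∪ ⋯ ∪ G_k`, the union of the gaps. -/
def gapsUnion (P : BlockStructure n δ A) : Finset (Fin n) :=
  Finset.univ.biUnion P.gap

/-- `f_δ(A) = A ∪ 𝒢_δ(A)`. -/
def fset (P : BlockStructure n δ A) : Finset (Fin n) :=
  A ∪ P.gapsUnion

end BlockStructure

open Finset

variable {n : ℕ} [NeZero n]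

lemma mem_cArc {s x : Fin n} {l : ℕ} : x ∈ cArc n s l ↔ ∃ t, t < l ∧ x = s + (t : Fin n) := by
  simp [cArc, Finset.mem_image, Finset.mem_range, eq_comm]

lemma cArc_mono {s : Fin n} {l₁ l₂ : ℕ} (h : l₁ ≤ l₂) : cArc n s l₁ ⊆ cArc n s l₂ := by
  intro x hx
  rcases mem_cArc.1 hx with ⟨t, ht, rfl⟩
  exact mem_cArc.2 ⟨t, lt_of_lt_of_le ht h, rfl⟩

lemma cArc_shift_subset {s : Fin n} {a l L : ℕ} (h : a + l ≤ L) :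
    cArc n (s + (a : Fin n)) l ⊆ cArc n s L := by
  intro x hx
  rcases mem_cArc.1 hx with ⟨t, ht, rfl⟩
  refine mem_cArc.2 ⟨a + t, by omega, ?_⟩
  push_cast
  ring

lemma card_cArc_le {s : Fin n} {l : ℕ} : (cArc n s l).card ≤ l := by
  classical
  calc (cArc n s l).card ≤ (Finset.range l).card := Finset.card_image_le
  _ = l := Finset.card_range l

lemma card_cArc {s : Fin n} {l : ℕ} (h : l ≤ n) : (cArc n s l).card = l := by
  classical
  rw [cArc, Finset.card_image_of_injOn, Finset.card_range]
  intro t₁ h₁ t₂ h₂ he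
  simp only [Finset.coe_range, Set.mem_Iio] at h₁ h₂
  have : (t₁ : Fin n) = (t₂ : Fin n) := by
    have := add_left_cancel he
    exact this
  have hv := congrArg Fin.val this
  rwa [Fin.val_natCast, Fin.val_natCast, Nat.mod_eq_of_lt (by omega), Nat.mod_eq_of_lt (by omega)] at hv

lemma cArc_eq_univ {s : Fin n} {l : ℕ} (h : n ≤ l) : cArc n s l = Finset.univ := by
  ext x
  simp only [Finset.mem_univ, iff_true]
  refine mem_cArc.2 ⟨(x - s).val, lt_of_lt_of_le (x - s).isLt h, ?_⟩
  rw [Fin.cast_val_eq_self]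
  ring

lemma cArc_split {s : Fin n} (l₁ l₂ : ℕ) :
    cArc n s (l₁ + l₂) = cArc n s l₁ ∪ cArc n (s + (l₁ : Fin n)) l₂ := by
  ext x
  simp only [Finset.mem_union, mem_cArc]
  constructor
  · rintro ⟨t, ht, rfl⟩
    rcases lt_or_ge t l₁ with h | h
    · exact Or.inl ⟨t, h, rfl⟩
    · refine Or.inr ⟨t - l₁, by omega, ?_⟩
      have : ((t : ℕ) : Fin n) = ((l₁ : ℕ) : Fin n) + ((t - l₁ : ℕ) : Fin n) := by
        rw [← Nat.cast_add]
        congr 1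
        omega
      rw [this, add_assoc]
  · rintro (⟨t, ht, rfl⟩ | ⟨t, ht, rfl⟩)
    · exact ⟨t, by omega, rfl⟩
    · refine ⟨l₁ + t, by omega, ?_⟩
      rw [Nat.cast_add, add_assoc]

lemma cArc_split_disjoint {s : Fin n} {l₁ l₂ : ℕ} (h : l₁ + l₂ ≤ n) :
    Disjoint (cArc n s l₁) (cArc n (s + (l₁ : Fin n)) l₂) := by
  rw [Finset.disjoint_left]
  intro x hx₁ hx₂
  rcases mem_cArc.1 hx₁ with ⟨t₁, ht₁, he₁⟩
  rcases mem_cArc.1 hx₂ with ⟨t₂, ht₂, he₂⟩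
  rw [he₁, add_assoc] at he₂
  have he : ((t₁ : ℕ) : Fin n) = ((l₁ + t₂ : ℕ) : Fin n) := by
    rw [Nat.cast_add]; exact add_left_cancel he₂
  have hv := congrArg Fin.val he
  rw [Fin.val_natCast, Fin.val_natCast, Nat.mod_eq_of_lt (by omega), Nat.mod_eq_of_lt (by omega)] at hv
  omega

/-- The arc of length `l` ending at `z`. -/
def arcE (n : ℕ) [NeZero n] (z : Fin n) (l : ℕ) : Finset (Fin n) :=
  cArc n (z - ((l - 1 : ℕ) : Fin n)) l

/-- circular distance from `a` to `b` (clockwise). -/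
def dd {n : ℕ} [NeZero n] (a b : Fin n) : ℕ := (b - a).val

lemma dd_lt {a b : Fin n} : dd a b < n := (b - a).isLt

lemma dd_self {a : Fin n} : dd a a = 0 := by simp [dd]

lemma dd_eq_zero_iff {a b : Fin n} : dd a b = 0 ↔ a = b := by
  unfold dd
  rw [show (0:ℕ) = (0 : Fin n).val from rfl, Fin.val_inj, sub_eq_zero, eq_comm]

lemma dd_add_mod (a b c : Fin n) : (dd a b + dd b c) % n = dd a c := by
  unfold dd
  have : (b - a) + (c - b) = c - a := by ring
  rw [← this, Fin.val_add]

lemma dd_sub {a b c : Fin n} (h : dd a b ≤ dd a c) : dd a b + dd b c = dd a c := by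
  have hm := dd_add_mod a b c
  have h1 : dd b c < n := dd_lt
  have h2 : dd a c < n := dd_lt
  rcases Nat.lt_or_ge (dd a b + dd b c) n with hs | hs
  · rwa [Nat.mod_eq_of_lt hs] at hm
  · exfalso
    have : (dd a b + dd b c) - n < n := by omega
    rw [Nat.mod_eq_sub_mod hs, Nat.mod_eq_of_lt this] at hm
    omega

lemma add_dd {a b : Fin n} : a + ((dd a b : ℕ) : Fin n) = b := by
  unfold dd
  rw [Fin.cast_val_eq_self]
  ring

lemma mem_arcE {z x : Fin n} {l : ℕ} (h1 : 1 ≤ l) (h2 : l ≤ n) :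
    x ∈ arcE n z l ↔ dd x z < l := by
  constructor
  · intro hx
    rcases mem_cArc.1 hx with ⟨t, ht, rfl⟩
    have hzx : z - (z - ((l - 1 : ℕ) : Fin n) + (t : Fin n)) = (((l - 1 - t : ℕ)) : Fin n) := by
      have : ((l - 1 : ℕ) : Fin n) = ((l - 1 - t : ℕ) : Fin n) + ((t : ℕ) : Fin n) := by
        rw [← Nat.cast_add]; congr 1; omega
      rw [this]; ring
    unfold dd
    rw [hzx, Fin.val_natCast, Nat.mod_eq_of_lt (by omega)]
    omega
  · intro hx
    obtain ⟨a, ha⟩ : ∃ a, a = dd x z := ⟨_, rfl⟩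
    have hal : a < l := by rw [ha]; exact hx
    have h4 : x + ((a : ℕ) : Fin n) = z := by rw [ha]; exact add_dd
    have hx' : x = z - ((l - 1 : ℕ) : Fin n) + (((l - 1 - a : ℕ)) : Fin n) := by
      have h3 : ((l - 1 : ℕ) : Fin n) = ((l - 1 - a : ℕ) : Fin n) + ((a : ℕ) : Fin n) := by
        rw [← Nat.cast_add]; congr 1; omega
      calc x = z - ((a : ℕ) : Fin n) := eq_sub_of_add_eq h4
      _ = z - ((l - 1 : ℕ) : Fin n) + (((l - 1 - a : ℕ)) : Fin n) := by rw [h3]; ring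
    exact mem_cArc.2 ⟨l - 1 - a, by omega, hx'⟩

lemma self_mem_arcE {z : Fin n} {l : ℕ} (h1 : 1 ≤ l) : z ∈ arcE n z l := by
  refine mem_cArc.2 ⟨l - 1, by omega, ?_⟩
  ring

lemma card_arcE {z : Fin n} {l : ℕ} (h : l ≤ n) : (arcE n z l).card = l := card_cArc h

lemma arcE_split {z : Fin n} {p l : ℕ} (hp : 1 ≤ p) (hpl : p < l) (hl : l ≤ n) :
    arcE n z l = arcE n (z - ((p : ℕ) : Fin n)) (l - p) ∪ arcE n z p ∧
      Disjoint (arcE n (z - ((p : ℕ) : Fin n)) (l - p)) (arcE n z p) := by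
  have hcast : ((l - 1 : ℕ) : Fin n) = ((l - p : ℕ) : Fin n) + ((p - 1 : ℕ) : Fin n) := by
    rw [← Nat.cast_add]; congr 1; omega
  have e1 : arcE n (z - ((p : ℕ) : Fin n)) (l - p) =
      cArc n (z - ((l - 1 : ℕ) : Fin n)) (l - p) := by
    unfold arcE
    congr 1
    have : ((l - p - 1 : ℕ) : Fin n) + ((p : ℕ) : Fin n) = ((l - 1 : ℕ) : Fin n) := by
      rw [← Nat.cast_add]; congr 1; omega
    rw [← this]; ring
  have e2 : arcE n z p = cArc n (z - ((l - 1 : ℕ) : Fin n) + ((l - p : ℕ) : Fin n)) p := by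
    unfold arcE
    congr 1
    rw [hcast]; ring
  constructor
  · have hl' : l - p + p = l := by omega
    have e3 := cArc_split (s := z - ((l - 1 : ℕ) : Fin n)) (l - p) p
    rw [hl'] at e3
    rw [show arcE n z l = cArc n (z - ((l - 1 : ℕ) : Fin n)) l from rfl, e3, ← e1, ← e2]
  · rw [e1, e2]
    exact cArc_split_disjoint (by omega)

lemma arcE_one_eq {z : Fin n} {p : ℕ} (hp : 1 ≤ p) (s : Fin n) (hz : z = s + ((p - 1 : ℕ) : Fin n)) :
    arcE n z p = cArc n s p := by
  unfold arcE
  congr 1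
  rw [hz]; ring

lemma pair_aux : ∀ (m : ℕ) (T U : Finset (Fin n)), T.card = m → Disjoint T U → T.card ≤ U.card →
    ∃ S : Finset (Fin n), S ⊆ U ∧ S.card = T.card ∧
      ∀ z ∈ U \ S, ∀ l, 1 ≤ l → l ≤ n →
        (S ∩ arcE n z l).card ≤ (T ∩ arcE n z l).card := by
  intro m
  induction m with
  | zero =>
    intro T U hT _ _
    refine ⟨∅, Finset.empty_subset _, by simp [hT], ?_⟩
    intro z _ l _ _
    simp
  | succ m ih =>
    intro T U hT hdisj hcard
    have hTne : T.Nonempty := by rw [← Finset.card_pos, hT]; omega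
    have hUne : U.Nonempty := by rw [← Finset.card_pos]; omega
    obtain ⟨u₀, hu₀⟩ := hUne
    obtain ⟨t, htT, _⟩ := Finset.exists_min_image T (dd u₀) hTne
    have hu₀t : u₀ ≠ t := by
      intro h
      exact Finset.disjoint_left.1 hdisj htT (h ▸ hu₀)
    have htpos : 0 < dd u₀ t :=
      Nat.pos_of_ne_zero (fun h => hu₀t (dd_eq_zero_iff.1 h))
    set V := U.filter (fun x => dd u₀ x < dd u₀ t) with hV
    have hu₀V : u₀ ∈ V := Finset.mem_filter.2 ⟨hu₀, by rw [dd_self]; exact htpos⟩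
    obtain ⟨u, huV, humax⟩ := Finset.exists_max_image V (dd u₀) ⟨u₀, hu₀V⟩
    have huU : u ∈ U := (Finset.mem_filter.1 huV).1
    have hud : dd u₀ u < dd u₀ t := (Finset.mem_filter.1 huV).2
    have hdisj' : Disjoint (T.erase t) (U.erase u) :=
      hdisj.mono (Finset.erase_subset _ _) (Finset.erase_subset _ _)
    have hTc : (T.erase t).card = m := by
      rw [Finset.card_erase_of_mem htT, hT]
      omega
    have hUc : (T.erase t).card ≤ (U.erase u).card := by
      rw [Finset.card_erase_of_mem htT, Finset.card_erase_of_mem huU]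
      omega
    obtain ⟨S', hS'U, hS'c, hS'cond⟩ := ih (T.erase t) (U.erase u) hTc hdisj' hUc
    have huS' : u ∉ S' := fun h => (Finset.mem_erase.1 (hS'U h)).1 rfl
    refine ⟨insert u S', ?_, ?_, ?_⟩
    · intro x hx
      rcases Finset.mem_insert.1 hx with h | h
      · exact h ▸ huU
      · exact Finset.erase_subset _ _ (hS'U h)
    · rw [Finset.card_insert_of_notMem huS', hS'c, hTc, hT]
    · intro z hz l hl1 hln
      have hzU : z ∈ U := (Finset.mem_sdiff.1 hz).1
      have hzS : z ∉ insert u S' := (Finset.mem_sdiff.1 hz).2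
      have hzu : z ≠ u := fun h => hzS (h ▸ Finset.mem_insert_self _ _)
      have hz' : z ∈ U.erase u \ S' := Finset.mem_sdiff.2
        ⟨Finset.mem_erase.2 ⟨hzu, hzU⟩, fun h => hzS (Finset.mem_insert_of_mem h)⟩
      have hrec := hS'cond z hz' l hl1 hln
      have hkey : u ∈ arcE n z l → t ∈ arcE n z l := by
        intro humem
        have hduz : dd u z < l := (mem_arcE hl1 hln).1 humem
        have hzupos : 0 < dd u z :=
          Nat.pos_of_ne_zero (fun h => hzu (dd_eq_zero_iff.1 h).symm)
        have hut : dd u t ≤ dd u z := by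
          by_contra hcon
          push_neg at hcon
          have h1 : dd u₀ u + dd u t = dd u₀ t := dd_sub (le_of_lt hud)
          have h2 : dd u₀ z = dd u₀ u + dd u z := by
            have hm := dd_add_mod u₀ u z
            have hlt : dd u₀ u + dd u z < n := by
              have := dd_lt (a := u₀) (b := t)
              omega
            rw [Nat.mod_eq_of_lt hlt] at hm
            exact hm.symm
          have hzV : z ∈ V := Finset.mem_filter.2 ⟨hzU, by omega⟩
          have := humax z hzV
          omega
        have h3 : dd u t + dd t z = dd u z := dd_sub hut
        exact (mem_arcE hl1 hln).2 (by omega)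
      by_cases hu : u ∈ arcE n z l
      · have e1 : insert u S' ∩ arcE n z l = insert u (S' ∩ arcE n z l) :=
          Finset.insert_inter_of_mem hu
        have e2 : T ∩ arcE n z l = insert t (T.erase t ∩ arcE n z l) := by
          conv_lhs => rw [← Finset.insert_erase htT]
          exact Finset.insert_inter_of_mem (hkey hu)
        have h4 : u ∉ S' ∩ arcE n z l := fun h => huS' (Finset.mem_inter.1 h).1
        have h5 : t ∉ T.erase t ∩ arcE n z l := fun h =>
          (Finset.mem_erase.1 (Finset.mem_inter.1 h).1).1 rfl
        rw [e1, e2, Finset.card_insert_of_notMem h4, Finset.card_insert_of_notMem h5]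
        omega
      · rw [Finset.insert_inter_of_notMem hu]
        exact le_trans hrec (Finset.card_le_card (Finset.inter_subset_inter
          (Finset.erase_subset _ _) (Finset.Subset.refl _)))

lemma arcE_mono {z : Fin n} {l p : ℕ} (h : l ≤ p) : arcE n z l ⊆ arcE n z p := by
  intro x hx
  rcases mem_cArc.1 hx with ⟨t, ht, rfl⟩
  refine mem_cArc.2 ⟨p - l + t, by omega, ?_⟩
  have h2 : ((p - l + t : ℕ) : Fin n) + ((l - 1 : ℕ) : Fin n) = ((t : ℕ) : Fin n) + ((p - 1 : ℕ) : Fin n) := by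
    rw [← Nat.cast_add, ← Nat.cast_add]
    congr 1
    omega
  have h3 : ((p - l + t : ℕ) : Fin n) = ((t : ℕ) : Fin n) + ((p - 1 : ℕ) : Fin n) - ((l - 1 : ℕ) : Fin n) := by
    rw [← h2]; ring
  rw [h3]; ring

section Facts

variable {c d : ℕ} {A : Finset (Fin n)} (P : BlockStructure n (c : ℝ) A)

lemma block_def (i : Fin P.k) : P.block i = cArc n (P.bstart i) (P.blen i) := rfl

lemma gap_def (i : Fin P.k) :
    P.gap i = cArc n (P.bstart i + ((P.blen i : ℕ) : Fin n)) (P.glen i) := rfl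

lemma disjoint_block_gapsUnion (i : Fin P.k) : Disjoint (P.block i) P.gapsUnion :=
  (Finset.disjoint_biUnion_right _ _ _).2 (fun j _ => P.block_gap_disj i j)

lemma disjoint_A_gapsUnion : Disjoint A P.gapsUnion :=
  (Finset.disjoint_biUnion_right _ _ _).2 (fun j _ => (P.gap_inter j).symm)

lemma blen_facts (hc : 2 ≤ c) (hn : n = c * d + c - 1) (hA : A.card = d) (i : Fin P.k) :
    P.blen i < n ∧ (cArc n (P.bstart i) (P.blen i)).card = P.blen i ∧
      P.blen i = c * (A ∩ cArc n (P.bstart i) (P.blen i)).card := by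
  have ha : (A ∩ cArc n (P.bstart i) (P.blen i)).card ≤ d :=
    hA ▸ Finset.card_le_card Finset.inter_subset_left
  have hub : (cArc n (P.bstart i) (P.blen i)).card
      ≤ c * (A ∩ cArc n (P.bstart i) (P.blen i)).card := by
    have := P.density_ub i
    exact_mod_cast this
  have hcdn : c * d < n := by omega
  have hblock_lt : (cArc n (P.bstart i) (P.blen i)).card < n :=
    lt_of_le_of_lt (le_trans hub (Nat.mul_le_mul_left c ha)) hcdn
  have hbn : P.blen i < n := by
    by_contra hcon
    push_neg at hcon
    rw [cArc_eq_univ hcon, Finset.card_univ, Fintype.card_fin] at hblock_lt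
    omega
  have hbc : (cArc n (P.bstart i) (P.blen i)).card = P.blen i := card_cArc (le_of_lt hbn)
  have hlb : c * (A ∩ cArc n (P.bstart i) (P.blen i)).card ≤ P.blen i := by
    have hr := P.density_lb i
    rw [hbc] at hr
    have h2 : ((c * (A ∩ cArc n (P.bstart i) (P.blen i)).card : ℕ) : ℝ)
        < ((P.blen i + 1 : ℕ) : ℝ) := by
      push_cast
      linarith
    have h3 := Nat.cast_lt.1 h2
    omega
  have h4 : P.blen i ≤ c * (A ∩ cArc n (P.bstart i) (P.blen i)).card :=
    le_trans (le_of_eq hbc.symm) hub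
  exact ⟨hbn, hbc, le_antisymm h4 hlb⟩

lemma initial_seg_nat (i : Fin P.k) {r : ℕ} (hr1 : 1 ≤ r) (hrb : r < P.blen i)
    (hbn : P.blen i < n) :
    r + 1 ≤ c * (A ∩ cArc n (P.bstart i) r).card := by
  have := P.initial_seg i (r - 1) (by omega)
  rw [show r - 1 + 1 = r from by omega] at this
  rw [card_cArc (show r ≤ n from by omega)] at this
  have h2 : ((r + 1 : ℕ) : ℝ) ≤ ((c * (cArc n (P.bstart i) r ∩ A).card : ℕ) : ℝ) := by
    push_cast
    linarith
  have h3 := Nat.cast_le.1 h2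
  rwa [Finset.inter_comm] at h3

lemma prev_exists (i : Fin P.k) :
    ∃ j : Fin P.k, P.bstart i = P.bstart j + ((P.blen j + P.glen j : ℕ) : Fin n) := by
  refine ⟨⟨(i.val + (P.k - 1)) % P.k, Nat.mod_lt _ P.kpos⟩, ?_⟩
  have hidx : (((i.val + (P.k - 1)) % P.k) + 1) % P.k = i.val := by
    have hk := P.kpos
    have hi := i.isLt
    rw [Nat.mod_add_mod, show i.val + (P.k - 1) + 1 = i.val + P.k from by omega,
      Nat.add_mod_right, Nat.mod_eq_of_lt hi]
  have heq : (⟨(((i.val + (P.k - 1)) % P.k) + 1) % P.k,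
      Nat.mod_lt _ P.kpos⟩ : Fin P.k) = i := Fin.ext hidx
  calc P.bstart i
      = P.bstart ⟨(((i.val + (P.k - 1)) % P.k) + 1) % P.k, Nat.mod_lt _ P.kpos⟩ := by rw [heq]
    _ = _ := P.consec ⟨(i.val + (P.k - 1)) % P.k, Nat.mod_lt _ P.kpos⟩

end Facts


lemma cast_pred_add_one {x : ℕ} (hx : 1 ≤ x) : ((x : ℕ) : Fin n) = ((x - 1 : ℕ) : Fin n) + 1 := by
  have h : (((x - 1) + 1 : ℕ) : Fin n) = ((x - 1 : ℕ) : Fin n) + 1 := by push_cast; ring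
  rw [← h]
  congr 1
  omega

section Inv

variable {c d : ℕ} {A : Finset (Fin n)} (P : BlockStructure n (c : ℝ) A)

lemma INV (hc : 2 ≤ c) (hn : n = c * d + c - 1) (hA : A.card = d) :
    ∀ l, 1 ≤ l → l ≤ n →
      ((∀ (z : Fin n) (i : Fin P.k) (t : ℕ), t < P.blen i → z = P.bstart i + ((t : ℕ) : Fin n) →
        c * (A ∩ arcE n z l).card + (arcE n z l ∩ P.gapsUnion).card + (t + 1) ≤
          l + c * (A ∩ arcE n z (t + 1)).card) ∧
      (∀ (z : Fin n) (i : Fin P.k) (p : ℕ), 1 ≤ p → p ≤ P.glen i →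
        z = P.bstart i + ((P.blen i : ℕ) : Fin n) + ((p - 1 : ℕ) : Fin n) →
        c * (A ∩ arcE n z l).card + (arcE n z l ∩ P.gapsUnion).card ≤ l)) := by
  intro l
  induction l using Nat.strong_induction_on with
  | _ l IH =>
  intro hl1 hln
  constructor
  · -- block case
    intro z i t ht hz
    obtain ⟨hbn, hbcard, hbe⟩ := blen_facts P hc hn hA i
    have hq1 : 1 ≤ t + 1 := by omega
    have harcq : arcE n z (t + 1) = cArc n (P.bstart i) (t + 1) := by
      apply arcE_one_eq hq1
      rw [hz]
      simp
    rcases le_or_gt l (t + 1) with hlq | hql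
    · -- l ≤ t+1 : arc stays inside the block
      have harcl : arcE n z l = cArc n (P.bstart i + ((t + 1 - l : ℕ) : Fin n)) l := by
        apply arcE_one_eq hl1
        rw [hz, show ((t : ℕ) : Fin n) = ((t + 1 - l : ℕ) : Fin n) + ((l - 1 : ℕ) : Fin n) from by
          rw [← Nat.cast_add]; congr 1; omega]
        ring
      have hsub : arcE n z l ⊆ cArc n (P.bstart i) (P.blen i) := by
        rw [harcl]
        exact cArc_shift_subset (by omega)
      have hGu : arcE n z l ∩ P.gapsUnion = ∅ :=
        Finset.disjoint_iff_inter_eq_empty.1 ((disjoint_block_gapsUnion P i).mono_left hsub)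
      rcases eq_or_lt_of_le hlq with heq | hlt
      · rw [hGu, heq]
        simp only [Finset.card_empty, Nat.add_zero]
        omega
      · set r := t + 1 - l with hr
        have hr1 : 1 ≤ r := by omega
        have hrb : r < P.blen i := by omega
        have hsplit := cArc_split (s := P.bstart i) r l
        rw [show r + l = t + 1 from by omega] at hsplit
        have hdisj := cArc_split_disjoint (s := P.bstart i) (l₁ := r) (l₂ := l)
          (by omega)
        have hcardsum : (A ∩ cArc n (P.bstart i) (t + 1)).card
            = (A ∩ cArc n (P.bstart i) r).card + (A ∩ arcE n z l).card := by
          rw [hsplit, Finset.inter_union_distrib_left,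
            Finset.card_union_of_disjoint
              (hdisj.mono Finset.inter_subset_right Finset.inter_subset_right), harcl]
        have hiv := initial_seg_nat P i hr1 hrb hbn
        rw [harcq, hcardsum, hGu]
        simp only [Finset.card_empty, Nat.add_zero]
        have hmul := Nat.mul_add c (A ∩ cArc n (P.bstart i) r).card (A ∩ arcE n z l).card
        have hrl : r + l = t + 1 := by omega
        linarith
    · -- t + 1 < l : peel off the initial segment of the block
      obtain ⟨hsp, hdisj⟩ := arcE_split hq1 hql hln
      obtain ⟨j, hj⟩ := prev_exists P i
      obtain ⟨hbnj, hbcardj, hbej⟩ := blen_facts P hc hn hA j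
      set z' := z - ((t + 1 : ℕ) : Fin n) with hz'def
      have hIH1 := IH (l - (t + 1)) (by omega) (by omega) (by omega)
      have hbg1 : 1 ≤ P.blen j + P.glen j := by
        have := P.blen_pos j; omega
      have hz' : z' = P.bstart j + ((P.blen j + P.glen j - 1 : ℕ) : Fin n) := by
        rw [hz'def, hz, hj, cast_pred_add_one hbg1,
          show ((t + 1 : ℕ) : Fin n) = ((t : ℕ) : Fin n) + 1 from by push_cast; ring]
        ring
      have harc' : c * (A ∩ arcE n z' (l - (t + 1))).card
          + (arcE n z' (l - (t + 1)) ∩ P.gapsUnion).card ≤ l - (t + 1) := by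
        rcases Nat.eq_zero_or_pos (P.glen j) with hg0 | hgpos
        · have hzb : z' = P.bstart j + ((P.blen j - 1 : ℕ) : Fin n) := by
            rw [hz', hg0]
            norm_num
          have hb := hIH1.1 z' j (P.blen j - 1) (by have := P.blen_pos j; omega) hzb
          rw [show P.blen j - 1 + 1 = P.blen j from by have := P.blen_pos j; omega] at hb
          have harcb : arcE n z' (P.blen j) = cArc n (P.bstart j) (P.blen j) :=
            arcE_one_eq (P.blen_pos j) _ hzb
          rw [harcb] at hb
          omega
        · have hzg : z' = P.bstart j + ((P.blen j : ℕ) : Fin n) + ((P.glen j - 1 : ℕ) : Fin n) := by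
            rw [hz', show P.blen j + P.glen j - 1 = P.blen j + (P.glen j - 1) from by omega,
              Nat.cast_add, add_assoc]
          exact hIH1.2 z' j (P.glen j) hgpos le_rfl hzg
      have hq_sub : arcE n z (t + 1) ⊆ cArc n (P.bstart i) (P.blen i) := by
        rw [harcq]; exact cArc_mono (by omega)
      have hGuq : arcE n z (t + 1) ∩ P.gapsUnion = ∅ :=
        Finset.disjoint_iff_inter_eq_empty.1 ((disjoint_block_gapsUnion P i).mono_left hq_sub)
      have hA_split : (A ∩ arcE n z l).card
          = (A ∩ arcE n z' (l - (t + 1))).card + (A ∩ arcE n z (t + 1)).card := by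
        rw [hsp, Finset.inter_union_distrib_left,
          Finset.card_union_of_disjoint
            (hdisj.mono Finset.inter_subset_right Finset.inter_subset_right)]
      have hGu_split : (arcE n z l ∩ P.gapsUnion).card
          = (arcE n z' (l - (t + 1)) ∩ P.gapsUnion).card
            + (arcE n z (t + 1) ∩ P.gapsUnion).card := by
        rw [hsp, Finset.union_inter_distrib_right,
          Finset.card_union_of_disjoint
            (hdisj.mono Finset.inter_subset_left Finset.inter_subset_left)]
      rw [hA_split, hGu_split, hGuq]
      simp only [Finset.card_empty, Nat.add_zero]
      have hmul := Nat.mul_add c (A ∩ arcE n z' (l - (t + 1))).card (A ∩ arcE n z (t + 1)).card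
      have hlsub : l - (t + 1) + (t + 1) = l := by omega
      have h0 : 0 ≤ c * (A ∩ arcE n z (t + 1)).card := Nat.zero_le _
      linarith
  · -- gap case
    intro z i p hp1 hpg hz
    have harcp : arcE n z p = cArc n (P.bstart i + ((P.blen i : ℕ) : Fin n)) p :=
      arcE_one_eq hp1 _ hz
    have hsubgap : arcE n z p ⊆ P.gap i := by
      rw [harcp, gap_def]; exact cArc_mono hpg
    have hApempty : A ∩ arcE n z p = ∅ :=
      Finset.disjoint_iff_inter_eq_empty.1 (((P.gap_inter i).symm).mono_right hsubgap)
    rcases le_or_gt l p with hlp | hpl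
    · have hsub : arcE n z l ⊆ P.gap i := (arcE_mono hlp).trans hsubgap
      have hAempty : A ∩ arcE n z l = ∅ :=
        Finset.disjoint_iff_inter_eq_empty.1 (((P.gap_inter i).symm).mono_right hsub)
      rw [hAempty]
      simp only [Finset.card_empty, Nat.mul_zero, Nat.zero_add]
      calc (arcE n z l ∩ P.gapsUnion).card ≤ (arcE n z l).card :=
            Finset.card_le_card Finset.inter_subset_left
        _ ≤ l := card_cArc_le
    · obtain ⟨hsp, hdisj⟩ := arcE_split hp1 hpl hln
      obtain ⟨hbn, hbcard, hbe⟩ := blen_facts P hc hn hA i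
      set z' := z - ((p : ℕ) : Fin n) with hz'def
      have hzb : z' = P.bstart i + ((P.blen i - 1 : ℕ) : Fin n) := by
        rw [hz'def, hz, cast_pred_add_one hp1, cast_pred_add_one (P.blen_pos i)]
        ring
      have hIH1 := IH (l - p) (by omega) (by omega) (by omega)
      have hb := hIH1.1 z' i (P.blen i - 1) (by have := P.blen_pos i; omega) hzb
      rw [show P.blen i - 1 + 1 = P.blen i from by have := P.blen_pos i; omega] at hb
      have harcb : arcE n z' (P.blen i) = cArc n (P.bstart i) (P.blen i) :=
        arcE_one_eq (P.blen_pos i) _ hzb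
      rw [harcb] at hb
      have hA_split : (A ∩ arcE n z l).card
          = (A ∩ arcE n z' (l - p)).card + (A ∩ arcE n z p).card := by
        rw [hsp, Finset.inter_union_distrib_left,
          Finset.card_union_of_disjoint
            (hdisj.mono Finset.inter_subset_right Finset.inter_subset_right)]
      have hGu_split : (arcE n z l ∩ P.gapsUnion).card
          = (arcE n z' (l - p) ∩ P.gapsUnion).card + (arcE n z p ∩ P.gapsUnion).card := by
        rw [hsp, Finset.union_inter_distrib_right,
          Finset.card_union_of_disjoint
            (hdisj.mono Finset.inter_subset_left Finset.inter_subset_left)]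
      have hGp : (arcE n z p ∩ P.gapsUnion).card ≤ p :=
        le_trans (Finset.card_le_card Finset.inter_subset_left) card_cArc_le
      rw [hA_split, hGu_split, hApempty]
      simp only [Finset.card_empty, Nat.add_zero]
      have hmul := Nat.mul_add c (A ∩ arcE n z' (l - p)).card (A ∩ arcE n z p).card
      have hlsub : l - p + p = l := by omega
      linarith

end Inv


attribute [local instance] Classical.propDecidable

/-- `z` is blocked w.r.t. `A`: some arc ending at `z` has density at least `1/c`. -/
def Blocked (c : ℕ) {n : ℕ} [NeZero n] (A : Finset (Fin n)) (z : Fin n) : Prop :=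
  ∃ l, 1 ≤ l ∧ l ≤ n ∧ (arcE n z l).card ≤ c * (A ∩ arcE n z l).card

section Canon

variable {c d : ℕ} {A : Finset (Fin n)} (P : BlockStructure n (c : ℝ) A)

lemma gap_bound (hc : 2 ≤ c) (hn : n = c * d + c - 1) (hA : A.card = d)
    {z : Fin n} (hz : z ∈ P.gapsUnion) {l : ℕ} (hl1 : 1 ≤ l) (hln : l ≤ n) :
    c * (A ∩ arcE n z l).card + (arcE n z l ∩ P.gapsUnion).card ≤ l := by
  obtain ⟨i, _, hzi⟩ := Finset.mem_biUnion.1 hz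
  obtain ⟨t, ht, rfl⟩ := mem_cArc.1 hzi
  refine (INV P hc hn hA l hl1 hln).2 _ i (t + 1) (by omega) (by omega) ?_
  norm_num

lemma notBlocked_of_gap (hc : 2 ≤ c) (hn : n = c * d + c - 1) (hA : A.card = d)
    {z : Fin n} (hz : z ∈ P.gapsUnion) : ¬ Blocked c A z := by
  rintro ⟨l, hl1, hln, hcard⟩
  have h1 := gap_bound P hc hn hA hz hl1 hln
  have hpos : 1 ≤ (arcE n z l ∩ P.gapsUnion).card :=
    Finset.card_pos.2 ⟨z, Finset.mem_inter.2 ⟨self_mem_arcE hl1, hz⟩⟩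
  rw [card_arcE hln] at hcard
  linarith

lemma blocked_of_block (hc : 2 ≤ c) (hn : n = c * d + c - 1) (hA : A.card = d)
    {z : Fin n} {i : Fin P.k} (hz : z ∈ P.block i) : Blocked c A z := by
  obtain ⟨t, ht, rfl⟩ := mem_cArc.1 hz
  obtain ⟨hbn, hbcard, hbe⟩ := blen_facts P hc hn hA i
  refine ⟨t + 1, by omega, by omega, ?_⟩
  have harcq : arcE n (P.bstart i + ((t : ℕ) : Fin n)) (t + 1) = cArc n (P.bstart i) (t + 1) := by
    apply arcE_one_eq (by omega)
    norm_num
  rw [harcq, card_cArc (by omega)]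
  rcases eq_or_lt_of_le (show t + 1 ≤ P.blen i from ht) with heq | hlt
  · rw [heq]
    exact le_of_eq hbe
  · exact le_trans (Nat.le_succ (t + 1)) (initial_seg_nat P i (by omega) hlt hbn)

lemma fset_canon (hc : 2 ≤ c) (hn : n = c * d + c - 1) (hA : A.card = d) :
    P.fset = A ∪ Finset.univ.filter (fun z => ¬ Blocked c A z) := by
  rw [BlockStructure.fset]
  congr 1
  ext z
  simp only [Finset.mem_filter, Finset.mem_univ, true_and]
  constructor
  · intro hz
    exact notBlocked_of_gap P hc hn hA hz
  · intro hnb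
    rcases P.cover z with ⟨i, hzi⟩ | ⟨i, hzi⟩
    · exact absurd (blocked_of_block P hc hn hA hzi) hnb
    · exact Finset.mem_biUnion.2 ⟨i, Finset.mem_univ i, hzi⟩

end Canon
/-- (Lemma "uncovered top") Let `c, d, k` be positive integers with `c ≥ 2`
and `n = cd + c − 1`. If `D ⊆ [n]` with `|D| = d + k` is not contained in any interval
`[A, f_c(A)]` with `A` a `d`-subset of `[n]`, then no superset of `D` is contained in any
such interval. Here `F` assigns to each `d`-subset `A` the set `f_c(A)` coming from a block
structure of `A` with density `c`. -/
theorem uncovered_top (c d k n : ℕ) (hc : 2 ≤ c) (hd : 0 < d) (hk : 0 < k)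
    (hn : n = c * d + c - 1) [NeZero n]
    (F : Finset (Fin n) → Finset (Fin n))
    (hF : ∀ A : Finset (Fin n), A.card = d → ∃ P : BlockStructure n (c : ℝ) A, F A = P.fset)
    (D : Finset (Fin n)) (hDcard : D.card = d + k)
    (hD : ∀ A : Finset (Fin n), A.card = d → D ∉ fInterval A (F A)) :
    ∀ D' : Finset (Fin n), D ⊆ D' →
      ∀ A : Finset (Fin n), A.card = d → D' ∉ fInterval A (F A) := by

  intro D' hDD' A hA hmem
  rw [fInterval, Finset.mem_filter, Finset.mem_powerset] at hmem
  obtain ⟨hD'F, hAD'⟩ := hmem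
  obtain ⟨P, hFA⟩ := hF A hA
  have hfs : P.fset = A ∪ P.gapsUnion := rfl
  have hDF : D ⊆ A ∪ P.gapsUnion := by
    intro x hx
    have h := hD'F (hDD' hx)
    rw [hFA, hfs] at h
    exact h
  have hdisjTU : Disjoint (A \ D) (D \ A) := disjoint_sdiff_sdiff
  have hUG : D \ A ⊆ P.gapsUnion := by
    intro z hz
    rcases Finset.mem_union.1 (hDF (Finset.mem_sdiff.1 hz).1) with h | h
    · exact absurd h (Finset.mem_sdiff.1 hz).2
    · exact h
  have hsplitA : (A ∩ D) ∪ (A \ D) = A := by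
    ext x; simp only [Finset.mem_union, Finset.mem_inter, Finset.mem_sdiff]; tauto
  have hsplitD : (A ∩ D) ∪ (D \ A) = D := by
    ext x; simp only [Finset.mem_union, Finset.mem_inter, Finset.mem_sdiff]; tauto
  have hdisjAT : Disjoint (A ∩ D) (A \ D) :=
    ((Finset.sdiff_disjoint (s := D) (t := A)).symm).mono_left Finset.inter_subset_right
  have hdisjAU : Disjoint (A ∩ D) (D \ A) :=
    ((Finset.sdiff_disjoint (s := A) (t := D)).symm).mono_left Finset.inter_subset_left
  have hcardA : (A ∩ D).card + (A \ D).card = d := by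
    rw [← Finset.card_union_of_disjoint hdisjAT, hsplitA, hA]
  have hcardD : (A ∩ D).card + (D \ A).card = d + k := by
    rw [← Finset.card_union_of_disjoint hdisjAU, hsplitD, hDcard]
  obtain ⟨S, hSU, hScard, hScond⟩ :=
    pair_aux (A \ D).card (A \ D) (D \ A) rfl hdisjTU (by omega)
  have hdisjS : Disjoint (A ∩ D) S := hdisjAU.mono_right hSU
  have hA₀D : (A ∩ D) ∪ S ⊆ D :=
    Finset.union_subset Finset.inter_subset_right (hSU.trans (Finset.sdiff_subset))
  have hA₀card : ((A ∩ D) ∪ S).card = d := by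
    rw [Finset.card_union_of_disjoint hdisjS, hScard]
    omega
  obtain ⟨P₀, hFA₀⟩ := hF ((A ∩ D) ∪ S) hA₀card
  have hDF₀ : D ⊆ F ((A ∩ D) ∪ S) := by
    rw [hFA₀, fset_canon P₀ hc hn hA₀card]
    intro z hzD
    by_cases hzA₀ : z ∈ (A ∩ D) ∪ S
    · exact Finset.mem_union_left _ hzA₀
    · refine Finset.mem_union_right _ (Finset.mem_filter.2 ⟨Finset.mem_univ _, ?_⟩)
      have hzU : z ∈ D \ A := Finset.mem_sdiff.2 ⟨hzD, fun h =>
        hzA₀ (Finset.mem_union_left _ (Finset.mem_inter.2 ⟨h, hzD⟩))⟩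
      have hzUS : z ∈ (D \ A) \ S := Finset.mem_sdiff.2 ⟨hzU, fun h =>
        hzA₀ (Finset.mem_union_right _ h)⟩
      rintro ⟨l, hl1, hln, hcard⟩
      have hpair := hScond z hzUS l hl1 hln
      have h1 : (((A ∩ D) ∪ S) ∩ arcE n z l).card
          = ((A ∩ D) ∩ arcE n z l).card + (S ∩ arcE n z l).card := by
        rw [Finset.union_inter_distrib_right, Finset.card_union_of_disjoint
          (hdisjS.mono Finset.inter_subset_left Finset.inter_subset_left)]
      have h2 : (A ∩ arcE n z l).card
          = ((A ∩ D) ∩ arcE n z l).card + ((A \ D) ∩ arcE n z l).card := by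
        conv_lhs => rw [← hsplitA]
        rw [Finset.union_inter_distrib_right, Finset.card_union_of_disjoint
          (hdisjAT.mono Finset.inter_subset_left Finset.inter_subset_left)]
      have hgb := gap_bound P hc hn hA (hUG hzU) hl1 hln
      have hpos : 1 ≤ (arcE n z l ∩ P.gapsUnion).card :=
        Finset.card_pos.2 ⟨z, Finset.mem_inter.2 ⟨self_mem_arcE hl1, hUG hzU⟩⟩
      rw [card_arcE hln] at hcard
      have hmono : (((A ∩ D) ∪ S) ∩ arcE n z l).card ≤ (A ∩ arcE n z l).card := by omega
      have hcc : c * (((A ∩ D) ∪ S) ∩ arcE n z l).card ≤ c * (A ∩ arcE n z l).card :=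
        Nat.mul_le_mul_left c hmono
      linarith
  refine hD ((A ∩ D) ∪ S) hA₀card ?_
  rw [fInterval, Finset.mem_filter, Finset.mem_powerset]
  exact ⟨hDF₀, hA₀D⟩
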